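/- Let M be a positively t-determined S-module. Then every associated prime of r^*M is an associated prime of M: Ass(r^*M) ⊆ Ass(M). -/

import Mathlib

open MvPolynomial

noncomputable def mono (K : Type) [Field K] {n : ℕ} (a : Fin n → ℕ) : MvPolynomial (Fin n) K :=
  monomial (Finsupp.equivFunOnFinite.symm a) 1

def rmap {n : ℕ} (t a : Fin n → ℕ) : Fin n → ℕ := fun i => if 0 < a i then t i else 0

def sqrtv {n : ℕ} (a : Fin n → ℕ) : Fin n → ℕ := fun i => if 0 < a i then 1 else 0

structure MultiGrading (K : Type) [Field K] (n : ℕ) (M : Type) [AddCommGroup M]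
    [Module (MvPolynomial (Fin n) K) M] [Module K M]
    [IsScalarTower K (MvPolynomial (Fin n) K) M] where
  g : (Fin n → ℕ) → Submodule K M
  internal : DirectSum.IsInternal g
  compat : ∀ a b : Fin n → ℕ, ∀ m ∈ g a, mono K b • m ∈ g (a + b)

variable {K : Type} [Field K] {n : ℕ}

def PosDetermined {M : Type} [AddCommGroup M] [Module (MvPolynomial (Fin n) K) M] [Module K M]
    [IsScalarTower K (MvPolynomial (Fin n) K) M] (G : MultiGrading K n M) (t : Fin n → ℕ) : Prop :=
  ∀ (a : Fin n → ℕ) (i : Fin n), t i ≤ a i →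
    Set.BijOn (fun m => (X i : MvPolynomial (Fin n) K) • m) (G.g a : Set M) (G.g (a + Pi.single i 1) : Set M)

def IsRStar {M N : Type} [AddCommGroup M] [Module (MvPolynomial (Fin n) K) M] [Module K M]
    [IsScalarTower K (MvPolynomial (Fin n) K) M]
    [AddCommGroup N] [Module (MvPolynomial (Fin n) K) N] [Module K N]
    [IsScalarTower K (MvPolynomial (Fin n) K) N]
    (t : Fin n → ℕ) (G : MultiGrading K n M) (H : MultiGrading K n N) : Prop :=
  ∃ e : (Fin n → ℕ) → (M →ₗ[K] N),
    (∀ a, Set.InjOn (e a) (G.g (rmap t a))) ∧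
    (∀ a, e a '' (G.g (rmap t a)) = (H.g a : Set N)) ∧
    (∀ a b : Fin n → ℕ, ∀ m ∈ G.g (rmap t a),
      e (a + b) (mono K (rmap t (a + b) - rmap t a) • m) = mono K b • e a m)

noncomputable def mdim (R : Type) [CommRing R] (M : Type) [AddCommGroup M] [Module R M] :
    WithBot ℕ∞ :=
  ringKrullDim (R ⧸ (⊤ : Submodule R M).annihilator)

noncomputable def mdepth (K : Type) [Field K] (n : ℕ) (M : Type) [AddCommGroup M] [Module (MvPolynomial (Fin n) K) M] : ℕ :=
  sSup {k : ℕ | ∃ rs : List (MvPolynomial (Fin n) K), rs.length = k ∧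
    (∀ r ∈ rs, r ∈ Ideal.span (Set.range (X : Fin n → MvPolynomial (Fin n) K))) ∧
    RingTheory.Sequence.IsRegular M rs}

noncomputable def IsCM (K : Type) [Field K] (n : ℕ) (M : Type) [AddCommGroup M] [Module (MvPolynomial (Fin n) K) M] : Prop :=
  (mdepth K n M : WithBot ℕ∞) = mdim (MvPolynomial (Fin n) K) M

section Lemmas
variable {M : Type} [AddCommGroup M] [Module (MvPolynomial (Fin n) K) M] [Module K M]
  [IsScalarTower K (MvPolynomial (Fin n) K) M]

local notation "S" => MvPolynomial (Fin n) K

lemma equivFun_symm_coe (d : Fin n →₀ ℕ) : Finsupp.equivFunOnFinite.symm (⇑d) = d :=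
  Finsupp.equivFunOnFinite.symm_apply_apply d

lemma mono_coe (d : Fin n →₀ ℕ) : mono K (⇑d) = monomial d 1 := by
  rw [mono, equivFun_symm_coe]

lemma mono_zero : mono K (0 : Fin n → ℕ) = 1 := by
  have : ((0 : Fin n →₀ ℕ) : Fin n → ℕ) = (0 : Fin n → ℕ) := rfl
  rw [← this, mono_coe, monomial_zero', C_1]

lemma mono_add (a b : Fin n → ℕ) : mono K (a + b) = mono K a * mono K b := by
  have h : Finsupp.equivFunOnFinite.symm (a + b) =
      Finsupp.equivFunOnFinite.symm a + Finsupp.equivFunOnFinite.symm b := by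
    ext i; rfl
  rw [mono, mono, mono, monomial_mul, mul_one, h]

lemma equivFun_symm_single (i : Fin n) (k : ℕ) :
    Finsupp.equivFunOnFinite.symm (Pi.single i k) = Finsupp.single i k := by
  rw [Equiv.symm_apply_eq]
  funext j
  simp [Finsupp.equivFunOnFinite, Finsupp.single_apply, Pi.single_apply, eq_comm]

lemma mono_single (i : Fin n) (k : ℕ) : mono K (Pi.single i k) = (X i : S) ^ k := by
  rw [mono, equivFun_symm_single, X_pow_eq_monomial]

lemma C_smul' (c : K) (m : M) : (C c : S) • m = c • m := by
  rw [← MvPolynomial.algebraMap_eq, algebraMap_smul]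

lemma MultiGrading.monomial_smul_mem (G : MultiGrading K n M) {a : Fin n → ℕ} {m : M}
    (hm : m ∈ G.g a) (d : Fin n →₀ ℕ) (c : K) :
    (monomial d c : S) • m ∈ G.g (a + ⇑d) := by
  have h1 : (monomial d c : S) = C c * monomial d 1 := by
    rw [C_mul_monomial, mul_one]
  rw [h1, mul_smul, C_smul']
  exact (G.g _).smul_mem c (by rw [← mono_coe]; exact G.compat a _ m hm)

end Lemmas

section Lemmas2
variable {M : Type} [AddCommGroup M] [Module (MvPolynomial (Fin n) K) M] [Module K M]
  [IsScalarTower K (MvPolynomial (Fin n) K) M]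

local notation "S" => MvPolynomial (Fin n) K

/-- Components in distinct graded pieces summing to zero are all zero. -/
lemma MultiGrading.sum_eq_zero (G : MultiGrading K n M) {β : Type} {s : Finset β}
    {ϕ : β → (Fin n → ℕ)} (hϕ : Set.InjOn ϕ s) {v : β → M}
    (hv : ∀ b ∈ s, v b ∈ G.g (ϕ b)) (h0 : ∑ b ∈ s, v b = 0) :
    ∀ b ∈ s, v b = 0 := by
  classical
  intro b₀ hb₀
  have hind := G.internal.submodule_iSupIndep
  have hdisj := (iSupIndep_def.mp hind) (ϕ b₀)
  have hmem : v b₀ ∈ ⨆ (j) (_ : j ≠ ϕ b₀), G.g j := by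
    have heq : v b₀ = -∑ b ∈ s.erase b₀, v b := by
      have h := Finset.add_sum_erase s v hb₀
      rw [h0] at h
      exact eq_neg_of_add_eq_zero_left h
    rw [heq]
    refine Submodule.neg_mem _ (Submodule.sum_mem _ ?_)
    intro b hb
    have hbne : ϕ b ≠ ϕ b₀ := fun hE =>
      (Finset.ne_of_mem_erase hb) (hϕ (Finset.mem_of_mem_erase hb) hb₀ hE)
    exact Submodule.mem_iSup_of_mem (ϕ b) (Submodule.mem_iSup_of_mem hbne
      (hv b (Finset.mem_of_mem_erase hb)))
  exact (Submodule.disjoint_def.mp hdisj) (v b₀) (hv b₀ hb₀) hmem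

/-- Fiberwise version: group a sum by degree. -/
lemma MultiGrading.fiber_eq_zero (G : MultiGrading K n M) {β : Type} {s : Finset β}
    {ϕ : β → (Fin n → ℕ)} {v : β → M}
    (hv : ∀ b ∈ s, v b ∈ G.g (ϕ b)) (h0 : ∑ b ∈ s, v b = 0) (i : Fin n → ℕ) :
    ∑ b ∈ s.filter (fun b => ϕ b = i), v b = 0 := by
  classical
  by_cases hi : i ∈ s.image ϕ
  · have hsum : ∑ j ∈ s.image ϕ, ∑ b ∈ s.filter (fun b => ϕ b = j), v b = 0 := by
      rw [Finset.sum_fiberwise_of_maps_to (fun b hb => Finset.mem_image_of_mem ϕ hb) v, h0]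
    refine G.sum_eq_zero (ϕ := id) (Set.injOn_id _)
      (v := fun j => ∑ b ∈ s.filter (fun b => ϕ b = j), v b) ?_ hsum i hi
    intro j _
    exact Submodule.sum_mem _ (fun b hb => by
      have := hv b (Finset.mem_of_mem_filter b hb)
      rwa [(Finset.mem_filter.mp hb).2] at this)
  · rw [Finset.filter_eq_empty_iff.mpr, Finset.sum_empty]
    intro b hb hE
    exact hi (Finset.mem_image.mpr ⟨b, hb, hE⟩)

/-- Every element decomposes as a finite sum of homogeneous components. -/
lemma MultiGrading.decompose (G : MultiGrading K n M) (z : M) :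
    ∃ (A : Finset (Fin n → ℕ)) (w : (Fin n → ℕ) → M),
      (∀ a, w a ∈ G.g a) ∧ (∀ a ∉ A, w a = 0) ∧ z = ∑ a ∈ A, w a := by
  classical
  obtain ⟨f, hf⟩ := G.internal.2 z
  refine ⟨f.support, fun a => (f a : M), fun a => (f a).2,
    fun a ha => by
      show ((f a : M)) = 0
      rw [DFinsupp.notMem_support_iff.mp ha]; rfl, ?_⟩
  rw [← hf]
  conv_lhs => rw [← DirectSum.sum_support_of f]
  rw [map_sum]
  exact Finset.sum_congr rfl (fun a _ => by rw [DirectSum.coeAddMonoidHom_of])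

/-- If a polynomial kills a homogeneous element, each monomial component kills it. -/
lemma MultiGrading.monomial_comp_kill (G : MultiGrading K n M) {a : Fin n → ℕ} {m : M}
    (hm : m ∈ G.g a) {s : S} (hs : s • m = 0) (d : Fin n →₀ ℕ) :
    (monomial d (coeff d s) : S) • m = 0 := by
  classical
  by_cases hd : d ∈ s.support
  · have hsum : ∑ e ∈ s.support, (monomial e (coeff e s) : S) • m = 0 := by
      rw [← Finset.sum_smul, support_sum_monomial_coeff, hs]
    refine G.sum_eq_zero (ϕ := fun e : Fin n →₀ ℕ => a + ⇑e) ?_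
      (fun e _ => G.monomial_smul_mem hm e _) hsum d hd
    intro e _ e' _ hE
    have : (⇑e : Fin n → ℕ) = ⇑e' := by
      funext i; have := congrFun hE i; simpa using this
    exact DFunLike.coe_injective this
  · rw [MvPolynomial.notMem_support_iff.mp hd, monomial_zero, zero_smul]

/-- If a monomial kills an element, it kills every homogeneous component. -/
lemma MultiGrading.monomial_kill_comp (G : MultiGrading K n M)
    {A : Finset (Fin n → ℕ)} {w : (Fin n → ℕ) → M} (hw : ∀ a, w a ∈ G.g a)
    {d : Fin n →₀ ℕ} {c : K} (h0 : (monomial d c : S) • (∑ a ∈ A, w a) = 0) :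
    ∀ a ∈ A, (monomial d c : S) • w a = 0 := by
  classical
  have hsum : ∑ a ∈ A, (monomial d c : S) • w a = 0 := by
    rw [← Finset.smul_sum, h0]
  refine G.sum_eq_zero (ϕ := fun a => a + ⇑d) ?_
    (fun a _ => G.monomial_smul_mem (hw a) d c) hsum
  intro a _ a' _ hE
  funext i; have := congrFun hE i; simpa using this
end Lemmas2

section Lemmas3
variable {M : Type} [AddCommGroup M] [Module (MvPolynomial (Fin n) K) M] [Module K M]
  [IsScalarTower K (MvPolynomial (Fin n) K) M]

local notation "S" => MvPolynomial (Fin n) K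

lemma symm_add (f g : Fin n → ℕ) :
    Finsupp.equivFunOnFinite.symm (f + g) =
      Finsupp.equivFunOnFinite.symm f + Finsupp.equivFunOnFinite.symm g := by
  ext i; rfl

lemma lex_pair {x X d B : Fin n →₀ ℕ} (hx : toLex x ≤ toLex X) (hd : toLex d ≤ toLex B)
    (h : x + d = X + B) : x = X ∧ d = B := by
  have hxX : x = X := by
    by_contra hne
    have hlt : toLex x < toLex X :=
      lt_of_le_of_ne hx (fun hE => hne (toLex.injective hE))
    have h2 : toLex (x + d) < toLex (X + B) := by
      calc toLex x + toLex d < toLex X + toLex d := add_lt_add_left hlt _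
        _ ≤ toLex X + toLex B := add_le_add_right hd _
    rw [h] at h2
    exact lt_irrefl _ h2
  subst hxX
  refine ⟨rfl, ?_⟩
  ext i
  have := DFunLike.congr_fun h i
  simp only [Finsupp.add_apply] at this
  omega

lemma MultiGrading.topkill (G : MultiGrading K n M) :
    ∀ (r : ℕ) (z : M) (β : Fin n → ℕ) (A : Finset (Fin n → ℕ)) (w : (Fin n → ℕ) → M),
    (∀ a ∈ A, w a ∈ G.g (a + β)) → (z = ∑ a ∈ A, w a) → A.card ≤ r →
    ∀ (s : S) (B : Fin n →₀ ℕ), B ∈ s.support →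
      (∀ d ∈ s.support, toLex d ≤ toLex B) → s • z = 0 →
      ((monomial B (coeff B s) : S)) ^ r • z = 0 := by
  classical
  intro r
  induction r with
  | zero =>
    intro z β A w hw hdec hcard s B hB hmax hs0
    have hz : z = 0 := by
      rw [hdec, Finset.card_eq_zero.mp (Nat.le_zero.mp hcard), Finset.sum_empty]
    simp [hz]
  | succ r IH =>
    intro z β A w hw hdec hcard s B hB hmax hs0
    by_cases hA : A = ∅
    · have hz : z = 0 := by rw [hdec, hA, Finset.sum_empty]
      simp [hz]
    · obtain ⟨Amax, hAmax, hAmaxmax⟩ := Finset.exists_max_image A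
        (fun a => toLex (Finsupp.equivFunOnFinite.symm a)) (Finset.nonempty_of_ne_empty hA)
      set sB : S := monomial B (coeff B s) with hsB
      have hdouble : ∑ p ∈ A ×ˢ s.support,
          (monomial p.2 (coeff p.2 s) : S) • w p.1 = 0 := by
        rw [Finset.sum_product]
        have hc : ∀ a ∈ A, ∑ d ∈ s.support, (monomial d (coeff d s) : S) • w a
            = s • w a := by
          intro a _
          rw [← Finset.sum_smul, support_sum_monomial_coeff]
        rw [Finset.sum_congr rfl hc, ← Finset.smul_sum, ← hdec, hs0]
      have hv : ∀ p ∈ A ×ˢ s.support,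
          (monomial p.2 (coeff p.2 s) : S) • w p.1 ∈ G.g (p.1 + β + ⇑p.2) := by
        intro p hp
        exact G.monomial_smul_mem (hw p.1 (Finset.mem_product.mp hp).1) p.2 _
      have hfilter := G.fiber_eq_zero
        (ϕ := fun p : (Fin n → ℕ) × (Fin n →₀ ℕ) => p.1 + β + ⇑p.2) hv hdouble
        (Amax + β + ⇑B)
      have hsingle : (A ×ˢ s.support).filter
          (fun p : (Fin n → ℕ) × (Fin n →₀ ℕ) => p.1 + β + ⇑p.2 = Amax + β + ⇑B) = {(Amax, B)} := by
        ext ⟨a, d⟩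
        simp only [Finset.mem_filter, Finset.mem_product, Finset.mem_singleton, Prod.mk.injEq]
        constructor
        · rintro ⟨⟨ha, hd⟩, hE⟩
          have hfun : a + ⇑d = Amax + ⇑B := by
            funext i
            have := congrFun hE i
            simp only [Pi.add_apply] at this ⊢
            omega
          have hfs : Finsupp.equivFunOnFinite.symm a + d
              = Finsupp.equivFunOnFinite.symm Amax + B := by
            have := congrArg Finsupp.equivFunOnFinite.symm hfun
            rwa [symm_add, symm_add, equivFun_symm_coe, equivFun_symm_coe] at this
          obtain ⟨h1, h2⟩ := lex_pair (hAmaxmax a ha) (hmax d hd) hfs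
          exact ⟨Finsupp.equivFunOnFinite.symm.injective h1, h2⟩
        · rintro ⟨rfl, rfl⟩
          exact ⟨⟨hAmax, hB⟩, rfl⟩
      rw [hsingle, Finset.sum_singleton] at hfilter
      -- hfilter : sB • w Amax = 0
      have hz1 : sB • z = ∑ a ∈ A.erase Amax, sB • w a := by
        rw [hdec, Finset.smul_sum, ← Finset.add_sum_erase A _ hAmax, hfilter, zero_add]
      have hw1 : ∀ a ∈ A.erase Amax, sB • w a ∈ G.g (a + (β + ⇑B)) := by
        intro a ha
        have := G.monomial_smul_mem (hw a (Finset.mem_of_mem_erase ha)) B (coeff B s)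
        rwa [add_assoc] at this
      have hcard1 : (A.erase Amax).card ≤ r := by
        rw [Finset.card_erase_of_mem hAmax]
        omega
      have hs1 : s • (sB • z) = 0 := by
        rw [smul_smul, mul_comm, ← smul_smul, hs0, smul_zero]
      have := IH (sB • z) (β + ⇑B) (A.erase Amax) (fun a => sB • w a) hw1 hz1 hcard1
        s B hB hmax hs1
      rw [pow_succ, mul_smul]
      exact this

end Lemmas3

section Lemmas4
variable {M : Type} [AddCommGroup M] [Module (MvPolynomial (Fin n) K) M] [Module K M]
  [IsScalarTower K (MvPolynomial (Fin n) K) M]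

local notation "S" => MvPolynomial (Fin n) K

/-- Annihilator primes of elements are monomial ideals. -/
lemma MultiGrading.prime_monomial_closed (G : MultiGrading K n M) {z : M} {P : Ideal S}
    (hP : P.IsPrime) (hz : ∀ s : S, s ∈ P ↔ s • z = 0) :
    ∀ s ∈ P, ∀ d : Fin n →₀ ℕ, (monomial d (coeff d s) : S) ∈ P := by
  classical
  obtain ⟨A, w, hw, hw0, hdec⟩ := G.decompose z
  suffices H : ∀ (N : ℕ) (s : S), s ∈ P → s.support.card ≤ N →
      ∀ d : Fin n →₀ ℕ, (monomial d (coeff d s) : S) ∈ P by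
    exact fun s hs d => H s.support.card s hs le_rfl d
  intro N
  induction N with
  | zero =>
    intro s hs hcard d
    have h0 : s = 0 := by
      have := Finset.card_eq_zero.mp (Nat.le_zero.mp hcard)
      rwa [MvPolynomial.support_eq_empty] at this
    rw [h0]
    simp only [coeff_zero, monomial_zero]
    exact P.zero_mem
  | succ N IH =>
    intro s hs hcard d
    by_cases h0 : s = 0
    · rw [h0]; simp only [coeff_zero, monomial_zero]; exact P.zero_mem
    · have hsupp : s.support.Nonempty := by
        rwa [Finset.nonempty_iff_ne_empty, ne_eq, MvPolynomial.support_eq_empty]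
      obtain ⟨B, hB, hBmax⟩ := Finset.exists_max_image s.support (fun d => toLex d) hsupp
      have hkill := G.topkill A.card z 0 A w (fun a ha => by simpa using hw a) hdec le_rfl
        s B hB hBmax ((hz s).mp hs)
      have hsB : (monomial B (coeff B s) : S) ∈ P :=
        hP.mem_of_pow_mem A.card ((hz _).mpr hkill)
      by_cases hdB : d = B
      · rwa [hdB]
      · set s' : S := s - monomial B (coeff B s) with hs'
        have hs'P : s' ∈ P := Ideal.sub_mem P hs hsB
        have hcoeff : ∀ e : Fin n →₀ ℕ, e ≠ B → coeff e s' = coeff e s := by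
          intro e he
          rw [hs', coeff_sub, coeff_monomial, if_neg (fun h => he h.symm), sub_zero]
        have hcB : coeff B s' = 0 := by
          rw [hs', coeff_sub, coeff_monomial, if_pos rfl, sub_self]
        have hsub : s'.support ⊆ s.support.erase B := by
          intro e he
          rw [Finset.mem_erase]
          have hne : e ≠ B := by
            intro hE; subst hE
            exact (MvPolynomial.mem_support_iff.mp he) hcB
          refine ⟨hne, MvPolynomial.mem_support_iff.mpr ?_⟩
          rw [← hcoeff e hne]
          exact MvPolynomial.mem_support_iff.mp he
        have hcard' : s'.support.card ≤ N := by
          have := Finset.card_le_card hsub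
          have h2 := Finset.card_erase_of_mem hB
          omega
        have := IH s' hs'P hcard' d
        rwa [hcoeff d hdB] at this

/-- A monomial in a prime ideal has a variable in the prime ideal. -/
lemma monomial_mem_prime {P : Ideal S} (hP : P.IsPrime) :
    ∀ d : Fin n →₀ ℕ, (monomial d 1 : S) ∈ P → ∃ i, 0 < d i ∧ (X i : S) ∈ P := by
  classical
  intro d
  induction d using Finsupp.induction with
  | zero =>
    intro h
    rw [monomial_zero', C_1] at h
    exact absurd (P.eq_top_iff_one.mpr h) hP.ne_top
  | single_add i k f hif hk IH =>
    intro h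
    rw [← one_mul (1 : K), ← monomial_mul] at h
    rcases hP.mem_or_mem h with h1 | h2
    · refine ⟨i, ?_, ?_⟩
      · have h3 : (Finsupp.single i k + f) i = k + f i := by
          simp [Finsupp.add_apply]
        have h4 := Nat.pos_of_ne_zero hk
        show 0 < (Finsupp.single i k + f) i
        omega
      · rw [← X_pow_eq_monomial] at h1
        have := hP.mem_of_pow_mem k h1
        exact this
    · obtain ⟨j, hj1, hj2⟩ := IH h2
      refine ⟨j, ?_, hj2⟩
      simp only [Finsupp.add_apply]
      omega

/-- Homogeneous witness for an associated prime. -/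
lemma MultiGrading.hom_witness (G : MultiGrading K n M) {P : Ideal S}
    (hP : IsAssociatedPrime P M) :
    ∃ (a : Fin n → ℕ) (z : M), z ∈ G.g a ∧ z ≠ 0 ∧ (∀ s : S, s ∈ P ↔ s • z = 0) := by
  classical
  obtain ⟨hprime, x, hx⟩ := (isAssociatedPrime_iff).mp hP
  have hmem : ∀ s : S, s ∈ P ↔ s • x = 0 := by
    intro s
    rw [hx, Submodule.mem_colon_singleton, Submodule.mem_bot]
  obtain ⟨A, w, hw, hw0, hdec⟩ := G.decompose x
  -- P is contained in the annihilator of every component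
  have hPw : ∀ s ∈ P, ∀ a, s • w a = 0 := by
    intro s hs a
    have hcomps : ∀ d : Fin n →₀ ℕ, (monomial d (coeff d s) : S) • w a = 0 := by
      intro d
      have h1 : (monomial d (coeff d s) : S) ∈ P := G.prime_monomial_closed hprime hmem s hs d
      have h2 : (monomial d (coeff d s) : S) • x = 0 := (hmem _).mp h1
      by_cases haA : a ∈ A
      · exact G.monomial_kill_comp hw (by rw [← hdec]; exact h2) a haA
      · rw [hw0 a haA, smul_zero]
    calc s • w a = ∑ d ∈ s.support, (monomial d (coeff d s) : S) • w a := by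
          rw [← Finset.sum_smul, support_sum_monomial_coeff]
      _ = 0 := by
          rw [Finset.sum_congr rfl (fun d _ => hcomps d), Finset.sum_const_zero]
  -- some component has annihilator exactly P
  have hexists : ∃ a ∈ A, ∀ s : S, s • w a = 0 → s ∈ P := by
    by_contra hcon
    push_neg at hcon
    choose sa hsa1 hsa2 using hcon
    set prod : S := ∏ a ∈ A.attach, sa a.1 a.2 with hprod
    have hkill : ∀ a ∈ A, prod • w a = 0 := by
      intro a ha
      have hmem' : (⟨a, ha⟩ : {x // x ∈ A}) ∈ A.attach := Finset.mem_attach _ _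
      have hfac := Finset.mul_prod_erase A.attach (fun p => sa p.1 p.2) hmem'
      rw [hprod, ← hfac, mul_comm, mul_smul, hsa1 a ha, smul_zero]
    have hPx : prod ∈ P := by
      rw [hmem, hdec, Finset.smul_sum]
      exact Finset.sum_eq_zero (fun a ha => hkill a ha)
    have := (Ideal.IsPrime.prod_mem_iff (hp := hprime)).mp hPx
    obtain ⟨a, ha, haP⟩ := this
    exact hsa2 a.1 a.2 haP
  obtain ⟨a₀, ha₀, hann⟩ := hexists
  refine ⟨a₀, w a₀, hw a₀, ?_, ?_⟩
  · intro h0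
    have : (1 : S) ∈ P := hann 1 (by rw [h0, smul_zero])
    exact hprime.ne_top (P.eq_top_iff_one.mpr this)
  · intro s
    exact ⟨fun hs => hPw s hs a₀, fun hs => hann s hs⟩

end Lemmas4

section Lemmas5
variable {M : Type} [AddCommGroup M] [Module (MvPolynomial (Fin n) K) M] [Module K M]
  [IsScalarTower K (MvPolynomial (Fin n) K) M]

local notation "S" => MvPolynomial (Fin n) K

lemma pos_det_inj {t : Fin n → ℕ} (G : MultiGrading K n M) (hM : PosDetermined G t) :
    ∀ (N' : ℕ) (v c : Fin n → ℕ), (∑ i, v i) ≤ N' → (∀ i, 0 < v i → t i ≤ c i) →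
    ∀ m ∈ G.g c, mono K v • m = 0 → m = 0 := by
  classical
  intro N'
  induction N' with
  | zero =>
    intro v c hsum hvc m hm h0
    have hv0 : v = 0 := by
      funext i
      have := Finset.sum_eq_zero_iff.mp (Nat.le_zero.mp hsum) i (Finset.mem_univ i)
      exact this
    rw [hv0, mono_zero, one_smul] at h0
    exact h0
  | succ N' IH =>
    intro v c hsum hvc m hm h0
    by_cases hv0 : v = 0
    · rw [hv0, mono_zero, one_smul] at h0
      exact h0
    · have hex : ∃ i, 0 < v i := by
        by_contra hcon
        push_neg at hcon
        exact hv0 (funext fun i => Nat.le_zero.mp (hcon i))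
      obtain ⟨i, hvi⟩ := hex
      set v' : Fin n → ℕ := Function.update v i (v i - 1) with hv'
      have hsplit : v = v' + Pi.single i 1 := by
        funext j
        by_cases hj : j = i
        · subst hj
          simp only [Pi.add_apply, hv', Function.update_self, Pi.single_eq_same]
          omega
        · simp only [Pi.add_apply, hv', Function.update_of_ne hj,
            Pi.single_eq_of_ne hj, add_zero]
      have hXm : (X i : S) • m = 0 → m = 0 := by
        intro hX
        have hbij := hM c i (hvc i hvi)
        exact hbij.injOn hm (zero_mem _) (by show (X i : S) • m = (X i : S) • (0 : M); rw [hX, smul_zero])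
      apply hXm
      have hXmem : (X i : S) • m ∈ G.g (c + Pi.single i 1) := by
        have := G.compat c (Pi.single i 1) m hm
        rwa [mono_single, pow_one] at this
      refine IH v' (c + Pi.single i 1) ?_ ?_ _ hXmem ?_
      · have h1 : ∑ j, v j = ∑ j, (v' j + (Pi.single i 1 : Fin n → ℕ) j) := by
          rw [hsplit]; rfl
        rw [Finset.sum_add_distrib] at h1
        have h2 : ∑ j, (Pi.single i 1 : Fin n → ℕ) j = 1 := by
          rw [Finset.sum_pi_single']
          simp
        omega
      · intro j hj
        have hvj : 0 < v j := by
          by_cases hji : j = i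
          · subst hji; exact hvi
          · rwa [hv', Function.update_of_ne hji] at hj
        have h3 : ((c + Pi.single i 1 : Fin n → ℕ)) j = c j + (Pi.single i 1 : Fin n → ℕ) j := rfl
        have h4 := hvc j hvj
        omega
      · rw [hsplit, mono_add, mono_single, pow_one, mul_smul] at h0
        exact h0

end Lemmas5


/-- `Ass(r^*M) ⊆ Ass(M)`. -/
theorem ass_rstar_subset {M N : Type} [AddCommGroup M] [Module (MvPolynomial (Fin n) K) M]
    [Module K M] [IsScalarTower K (MvPolynomial (Fin n) K) M]
    [AddCommGroup N] [Module (MvPolynomial (Fin n) K) N] [Module K N]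
    [IsScalarTower K (MvPolynomial (Fin n) K) N]
    (t : Fin n → ℕ) (ht : ∀ i, 1 ≤ t i)
    (G : MultiGrading K n M) [Module.Finite (MvPolynomial (Fin n) K) M]
    (hM : PosDetermined G t)
    (H : MultiGrading K n N) (hN : IsRStar t G H) :
    associatedPrimes (MvPolynomial (Fin n) K) N ⊆ associatedPrimes (MvPolynomial (Fin n) K) M := by
  classical
  intro P hP
  obtain ⟨e, he_inj, he_img, he_rel⟩ := hN
  have hprime : P.IsPrime := hP.1
  obtain ⟨a₀, z, hza, hz0, hzP⟩ := H.hom_witness hP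
  -- N1 : variables positive on the support of a₀ are not in P
  have hXa : ∀ i, 0 < a₀ i → (X i : MvPolynomial (Fin n) K) ∉ P := by
    intro i hi hXP
    have hzset : z ∈ (H.g a₀ : Set N) := hza
    rw [← he_img a₀] at hzset
    obtain ⟨m₀, hm₀, hem₀⟩ := hzset
    have hr : rmap t (a₀ + Pi.single i 1) = rmap t a₀ := by
      funext j
      by_cases hj : j = i
      · subst hj
        have h1 : (a₀ + Pi.single j 1 : Fin n → ℕ) j = a₀ j + 1 := by
          simp [Pi.add_apply]
        simp only [rmap, h1]
        rw [if_pos (by omega), if_pos hi]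
      · have h1 : (a₀ + Pi.single i 1 : Fin n → ℕ) j = a₀ j := by
          simp [Pi.add_apply, Pi.single_eq_of_ne hj]
        simp only [rmap, h1]
    have hsub : rmap t (a₀ + Pi.single i 1) - rmap t a₀ = (0 : Fin n → ℕ) := by
      rw [hr]
      funext j
      simp
    have hrel := he_rel a₀ (Pi.single i 1) m₀ hm₀
    rw [hsub, mono_zero, one_smul, hem₀, mono_single, pow_one] at hrel
    have hXz : (X i : MvPolynomial (Fin n) K) • z = 0 := (hzP _).mp hXP
    rw [hXz] at hrel
    have hm₀' : m₀ ∈ G.g (rmap t (a₀ + Pi.single i 1)) := by rw [hr]; exact hm₀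
    have hm00 : m₀ = 0 := he_inj (a₀ + Pi.single i 1) hm₀' (zero_mem _)
      (by rw [hrel, map_zero])
    exact hz0 (by rw [← hem₀, hm00, map_zero])
  -- Stage 4 : bump z up so that its degree has support exactly the complement of P
  set u : Fin n → ℕ := fun i =>
    if 0 < a₀ i then 0 else if (X i : MvPolynomial (Fin n) K) ∈ P then 0 else 1 with hu
  set a' : Fin n → ℕ := a₀ + u with ha'
  set z' : N := mono K u • z with hz'
  have hz'a : z' ∈ H.g a' := H.compat a₀ u z hza
  have hFa' : ∀ i, (0 < a' i ↔ (X i : MvPolynomial (Fin n) K) ∉ P) := by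
    intro i
    have h1 : a' i = a₀ i + u i := rfl
    by_cases h0 : 0 < a₀ i
    · constructor
      · intro _; exact hXa i h0
      · intro _; omega
    · have hu_i : u i = if (X i : MvPolynomial (Fin n) K) ∈ P then 0 else 1 := by
        rw [hu]; simp [h0]
      by_cases hXP : (X i : MvPolynomial (Fin n) K) ∈ P
      · rw [if_pos hXP] at hu_i
        constructor
        · intro h; omega
        · intro h; exact absurd hXP h
      · rw [if_neg hXP] at hu_i
        constructor
        · intro _; exact hXP
        · intro _; omega
  have hu_notP : mono K u ∉ P := by
    intro hmem
    rw [mono] at hmem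
    obtain ⟨i, hi1, hi2⟩ := monomial_mem_prime hprime _ hmem
    have : (Finsupp.equivFunOnFinite.symm u) i = u i := rfl
    rw [this, hu] at hi1
    by_cases h0 : 0 < a₀ i
    · simp [h0] at hi1
    · simp [h0, hi2] at hi1
  have hz'P : ∀ s : MvPolynomial (Fin n) K, s ∈ P ↔ s • z' = 0 := by
    intro s
    have heq : s • z' = (s * mono K u) • z := by rw [hz', mul_smul]
    constructor
    · intro hs
      rw [heq]
      exact (hzP _).mp (Ideal.mul_mem_right _ _ hs)
    · intro hs
      rw [heq] at hs
      rcases hprime.mem_or_mem ((hzP _).mpr hs) with h | h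
      · exact h
      · exact absurd h hu_notP
  have hz'0 : z' ≠ 0 := by
    intro h0
    have h1 : (1 : MvPolynomial (Fin n) K) ∈ P := (hz'P 1).mpr (by rw [h0, smul_zero])
    exact hprime.ne_top (P.eq_top_iff_one.mpr h1)
  -- Stage 5 : pull back to M
  have hz'set : z' ∈ (H.g a' : Set N) := hz'a
  rw [← he_img a'] at hz'set
  obtain ⟨m, hm, hem⟩ := hz'set
  have hm0 : m ≠ 0 := by
    intro h0
    exact hz'0 (by rw [← hem, h0, map_zero])
  -- M1 : for variables in P, X i ^ t i kills m
  have hM1 : ∀ i, (X i : MvPolynomial (Fin n) K) ∈ P →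
      ((X i : MvPolynomial (Fin n) K) ^ t i) • m = 0 := by
    intro i hXP
    have ha'i : a' i = 0 := by
      have := (hFa' i)
      by_contra hne
      exact (this.mp (by omega)) hXP
    have hrr : rmap t (a' + Pi.single i 1) = rmap t a' + Pi.single i (t i) := by
      funext j
      by_cases hj : j = i
      · subst hj
        have h1 : (a' + Pi.single j 1 : Fin n → ℕ) j = a' j + 1 := by simp [Pi.add_apply]
        have h2 : (rmap t a' + Pi.single j (t j) : Fin n → ℕ) j = rmap t a' j + t j := by
          simp [Pi.add_apply]
        have lhs : rmap t (a' + Pi.single j 1) j = t j := by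
          simp only [rmap]
          rw [h1, if_pos (by omega)]
        have rhs : (rmap t a' + Pi.single j (t j) : Fin n → ℕ) j = t j := by
          rw [h2]
          simp only [rmap]
          rw [if_neg (by rw [ha'i]; omega)]
          omega
        rw [lhs, rhs]
      · have h1 : (a' + Pi.single i 1 : Fin n → ℕ) j = a' j := by
          simp [Pi.add_apply, Pi.single_eq_of_ne hj]
        have h2 : (rmap t a' + Pi.single i (t i) : Fin n → ℕ) j = rmap t a' j := by
          simp [Pi.add_apply, Pi.single_eq_of_ne hj]
        simp only [rmap, h1]
        rw [h2]
        simp only [rmap]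
    have hsub : rmap t (a' + Pi.single i 1) - rmap t a' = Pi.single i (t i) := by
      rw [hrr]
      funext j
      have h1 : ((rmap t a' + Pi.single i (t i) - rmap t a' : Fin n → ℕ)) j
          = rmap t a' j + (Pi.single i (t i) : Fin n → ℕ) j - rmap t a' j := rfl
      rw [h1]
      omega
    have hrel := he_rel a' (Pi.single i 1) m hm
    rw [hsub, mono_single, hem, mono_single, pow_one] at hrel
    have hXz' : (X i : MvPolynomial (Fin n) K) • z' = 0 := (hz'P _).mp hXP
    rw [hXz'] at hrel
    have hmem1 : ((X i : MvPolynomial (Fin n) K) ^ t i) • m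
        ∈ G.g (rmap t (a' + Pi.single i 1)) := by
      rw [hrr, ← mono_single]
      exact G.compat _ _ m hm
    exact he_inj _ hmem1 (zero_mem _) (by rw [hrel, map_zero])
  -- Stage M3 : choose a maximal monomial (supported in P-variables) not killing m
  set dbound : Fin n → ℕ := fun i =>
    if (X i : MvPolynomial (Fin n) K) ∈ P then t i - 1 else 0 with hdbound
  have h0T : (0 : Fin n → ℕ) ∈ (Finset.Iic dbound).filter (fun k => mono K k • m ≠ 0) := by
    refine Finset.mem_filter.mpr ⟨Finset.mem_Iic.mpr (fun i => Nat.zero_le _), ?_⟩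
    rw [mono_zero, one_smul]
    exact hm0
  obtain ⟨k, hkT, hkmax⟩ := Finset.exists_max_image
    ((Finset.Iic dbound).filter (fun k => mono K k • m ≠ 0)) (fun k => ∑ i, k i) ⟨0, h0T⟩
  have hk_le : k ≤ dbound := Finset.mem_Iic.mp (Finset.mem_filter.mp hkT).1
  have hk_ne : mono K k • m ≠ 0 := (Finset.mem_filter.mp hkT).2
  set w : M := mono K k • m with hw
  have hwg : w ∈ G.g (rmap t a' + k) := G.compat _ _ m hm
  -- M5 : variables in P kill w
  have hM5 : ∀ i, (X i : MvPolynomial (Fin n) K) ∈ P →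
      (X i : MvPolynomial (Fin n) K) • w = 0 := by
    intro i hXP
    have hk_i : k i ≤ t i - 1 := by
      have := hk_le i
      rw [hdbound] at this
      simp only [if_pos hXP] at this
      exact this
    have hXw : (X i : MvPolynomial (Fin n) K) • w = mono K (k + Pi.single i 1) • m := by
      rw [hw, ← mul_smul]
      congr 1
      rw [mono_add, mono_single, pow_one, mul_comm]
    by_cases hcase : k i + 1 = t i
    · set k' : Fin n → ℕ := Function.update k i 0 with hk'
      have hsplit : k + Pi.single i 1 = k' + Pi.single i (t i) := by
        funext j
        by_cases hj : j = i
        · subst hj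
          have e1 : (k + Pi.single j 1 : Fin n → ℕ) j = k j + 1 := by simp [Pi.add_apply]
          have e2 : (k' + Pi.single j (t j) : Fin n → ℕ) j = 0 + t j := by
            simp [Pi.add_apply, hk', Function.update_self]
          rw [e1, e2]
          omega
        · have e1 : (k + Pi.single i 1 : Fin n → ℕ) j = k j := by
            simp [Pi.add_apply, Pi.single_eq_of_ne hj]
          have e2 : (k' + Pi.single i (t i) : Fin n → ℕ) j = k j := by
            simp [Pi.add_apply, hk', Function.update_of_ne hj, Pi.single_eq_of_ne hj]
          rw [e1, e2]
      rw [hXw, hsplit, mono_add, mono_single, mul_smul, hM1 i hXP, smul_zero]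
    · by_contra hne
      have hmemT : k + Pi.single i 1 ∈
          (Finset.Iic dbound).filter (fun k => mono K k • m ≠ 0) := by
        refine Finset.mem_filter.mpr ⟨Finset.mem_Iic.mpr ?_, ?_⟩
        · intro j
          by_cases hj : j = i
          · subst hj
            have e1 : (k + Pi.single j 1 : Fin n → ℕ) j = k j + 1 := by simp [Pi.add_apply]
            rw [e1]
            show k j + 1 ≤ dbound j
            simp only [hdbound, if_pos hXP]
            have h4 := ht j
            omega
          · have e1 : (k + Pi.single i 1 : Fin n → ℕ) j = k j := by
              simp [Pi.add_apply, Pi.single_eq_of_ne hj]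
            rw [e1]
            exact hk_le j
        · rw [← hXw]
          exact hne
      have hle := hkmax _ hmemT
      have e2 : ∑ j, (k + Pi.single i 1 : Fin n → ℕ) j
          = ∑ j, k j + ∑ j, (Pi.single i 1 : Fin n → ℕ) j := by
        have : ∑ j, (k + Pi.single i 1 : Fin n → ℕ) j
            = ∑ j, (k j + (Pi.single i 1 : Fin n → ℕ) j) := rfl
        rw [this, Finset.sum_add_distrib]
      have e3 : ∑ j, (Pi.single i 1 : Fin n → ℕ) j = 1 := by
        rw [Finset.sum_pi_single']
        simp
      omega
  -- conclusion : P is the annihilator of w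
  refine (isAssociatedPrime_iff).mpr ⟨hprime, w, ?_⟩
  ext s
  rw [Submodule.mem_colon_singleton, Submodule.mem_bot]
  constructor
  · -- P ⊆ ann(w)
    intro hs
    have hsum : s • w = ∑ dd ∈ s.support, (monomial dd (coeff dd s) : MvPolynomial (Fin n) K) • w := by
      rw [← Finset.sum_smul, support_sum_monomial_coeff]
    rw [hsum]
    apply Finset.sum_eq_zero
    intro dd hdd
    have hcomp : (monomial dd (coeff dd s) : MvPolynomial (Fin n) K) ∈ P :=
      H.prime_monomial_closed hprime hzP s hs dd
    have hc : coeff dd s ≠ 0 := MvPolynomial.mem_support_iff.mp hdd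
    have hmono1 : (monomial dd 1 : MvPolynomial (Fin n) K) ∈ P := by
      have he1 : (monomial dd 1 : MvPolynomial (Fin n) K)
          = C (coeff dd s)⁻¹ * monomial dd (coeff dd s) := by
        rw [C_mul_monomial, inv_mul_cancel₀ hc]
      rw [he1]
      exact Ideal.mul_mem_left _ _ hcomp
    obtain ⟨i, hdi, hXiP⟩ := monomial_mem_prime hprime dd hmono1
    have hdd_split : dd = (dd - Finsupp.single i 1) + Finsupp.single i 1 := by
      ext j
      by_cases hj : j = i
      · subst hj
        simp only [Finsupp.add_apply, Finsupp.tsub_apply, Finsupp.single_eq_same]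
        omega
      · simp only [Finsupp.add_apply, Finsupp.tsub_apply, Finsupp.single_eq_of_ne
          hj]
        omega
    have hfac : (monomial dd (coeff dd s) : MvPolynomial (Fin n) K)
        = monomial (dd - Finsupp.single i 1) (coeff dd s) * X i := by
      rw [X, monomial_mul, mul_one, ← hdd_split]
    rw [hfac, mul_smul, hM5 i hXiP, smul_zero]
  · -- ann(w) ⊆ P
    intro hsw
    have hkills := G.monomial_comp_kill hwg hsw
    suffices hcomp : ∀ dd ∈ s.support, (monomial dd (coeff dd s) : MvPolynomial (Fin n) K) ∈ P by
      have : s = ∑ dd ∈ s.support, (monomial dd (coeff dd s) : MvPolynomial (Fin n) K) :=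
        (support_sum_monomial_coeff s).symm
      rw [this]
      exact Ideal.sum_mem _ hcomp
    intro dd hdd
    by_cases hex : ∃ i, 0 < dd i ∧ (X i : MvPolynomial (Fin n) K) ∈ P
    · obtain ⟨i, hdi, hXiP⟩ := hex
      have hdd_split : dd = (dd - Finsupp.single i 1) + Finsupp.single i 1 := by
        ext j
        by_cases hj : j = i
        · subst hj
          simp only [Finsupp.add_apply, Finsupp.tsub_apply, Finsupp.single_eq_same]
          omega
        · simp only [Finsupp.add_apply, Finsupp.tsub_apply, Finsupp.single_eq_of_ne
            hj]
          omega
      have hfac : (monomial dd (coeff dd s) : MvPolynomial (Fin n) K)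
          = monomial (dd - Finsupp.single i 1) (coeff dd s) * X i := by
        rw [X, monomial_mul, mul_one, ← hdd_split]
      rw [hfac]
      exact Ideal.mul_mem_left _ _ hXiP
    · push_neg at hex
      exfalso
      have hc : coeff dd s ≠ 0 := MvPolynomial.mem_support_iff.mp hdd
      have hkill := hkills dd
      have hmono_kill : (monomial dd 1 : MvPolynomial (Fin n) K) • w = 0 := by
        have he1 : (monomial dd 1 : MvPolynomial (Fin n) K)
            = C (coeff dd s)⁻¹ * monomial dd (coeff dd s) := by
          rw [C_mul_monomial, inv_mul_cancel₀ hc]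
        rw [he1, mul_smul, hkill, smul_zero]
      have hvc : ∀ i, 0 < (⇑dd : Fin n → ℕ) i → t i ≤ (rmap t a' + k) i := by
        intro i hi
        have hXnP := hex i hi
        have hpos : 0 < a' i := (hFa' i).mpr hXnP
        have hrm : rmap t a' i = t i := by
          simp only [rmap]
          rw [if_pos hpos]
        have : (rmap t a' + k : Fin n → ℕ) i = rmap t a' i + k i := rfl
        omega
      have hwkill : mono K (⇑dd) • w = 0 := by
        rw [mono_coe]
        exact hmono_kill
      have hw0 : w = 0 :=
        pos_det_inj G hM (∑ i, dd i) (⇑dd) (rmap t a' + k) le_rfl hvc w hwg hwkill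
      exact hk_ne hw0
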